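/- Let R be a Γ-graded integral domain. Any nonempty intersection W := ⋂_{i∈I} W_{A_i} of subbasic open sets of the Zariski topology on HStar(R) is a complete lattice under ≤ (the suprema and infima computed in HStar(R) stay in W), and consequently W is quasi-compact. In particular W_A is quasi-compact for every nonzero homogeneous fractional ideal A. -/

import Mathlib

open FractionalIdeal
open scoped Classical

section Setup

variable {Γ : Type*} [AddCommMonoid Γ] [LinearOrder Γ] [IsOrderedCancelAddMonoid Γ] [DecidableEq Γ]
  {R : Type*} [CommRing R] [IsDomain R]
  (𝒜 : Γ → AddSubgroup R) [GradedRing 𝒜]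
  (K : Type*) [Field K] [Algebra R K] [IsFractionRing R K]

/-- The integral ideal corresponding to a fractional ideal contained in `R`. -/
def idealOf (J : FractionalIdeal (nonZeroDivisors R) K) : Ideal R :=
  (J : Submodule R K).comap (Algebra.linearMap R K)

/-- An integral ideal is homogeneous if it contains all homogeneous components of its elements. -/
def IsHomIdeal (I : Ideal R) : Prop := ∀ f ∈ I, ∀ γ : Γ, GradedRing.proj 𝒜 γ f ∈ I

/-- `C(I)`: the homogeneous ideal generated by the homogeneous components of elements of `I`. -/
def homC (I : Ideal R) : Ideal R :=
  Ideal.span {x | ∃ f ∈ I, ∃ γ : Γ, x = GradedRing.proj 𝒜 γ f}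

/-- `C(J)` for a fractional ideal `J ⊆ R`, as a fractional ideal. -/
def Cfrac (J : FractionalIdeal (nonZeroDivisors R) K) : FractionalIdeal (nonZeroDivisors R) K :=
  ↑(homC 𝒜 (idealOf K J))

/-- A fractional ideal is homogeneous if some nonzero homogeneous `s ∈ R` multiplies it into a
homogeneous integral ideal. -/
def IsHomFrac (A : FractionalIdeal (nonZeroDivisors R) K) : Prop :=
  ∃ s : R, s ≠ 0 ∧ SetLike.IsHomogeneousElem 𝒜 s ∧
    spanSingleton (nonZeroDivisors R) (algebraMap R K s) * A ≤ 1 ∧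
    IsHomIdeal 𝒜 (idealOf K (spanSingleton (nonZeroDivisors R) (algebraMap R K s) * A))

/-- A homogeneous element of the homogeneous quotient field, viewed inside `K`. -/
def IsHomElem (x : K) : Prop :=
  ∃ a b : R, SetLike.IsHomogeneousElem 𝒜 a ∧ SetLike.IsHomogeneousElem 𝒜 b ∧ b ≠ 0 ∧
    x * algebraMap R K b = algebraMap R K a

end Setup

/-- A homogeneous star operation on the graded domain `R`. -/
structure HomStarOp {Γ : Type*} [AddCommMonoid Γ] [LinearOrder Γ] [IsOrderedCancelAddMonoid Γ] [DecidableEq Γ]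
    {R : Type*} [CommRing R] [IsDomain R] (𝒜 : Γ → AddSubgroup R) [GradedRing 𝒜]
    (K : Type*) [Field K] [Algebra R K] [IsFractionRing R K] where
  toFun : FractionalIdeal (nonZeroDivisors R) K → FractionalIdeal (nonZeroDivisors R) K
  hom : ∀ A, A ≠ 0 → IsHomFrac 𝒜 K A → IsHomFrac 𝒜 K (toFun A)
  map_span : ∀ x : K, x ≠ 0 → IsHomElem 𝒜 K x →
    toFun (spanSingleton (nonZeroDivisors R) x) = spanSingleton (nonZeroDivisors R) x
  map_smul : ∀ x : K, x ≠ 0 → IsHomElem 𝒜 K x → ∀ A, A ≠ 0 → IsHomFrac 𝒜 K A →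
    toFun (spanSingleton (nonZeroDivisors R) x * A) = spanSingleton (nonZeroDivisors R) x * toFun A
  le_star : ∀ A, A ≠ 0 → IsHomFrac 𝒜 K A → A ≤ toFun A
  mono : ∀ A B, A ≠ 0 → B ≠ 0 → IsHomFrac 𝒜 K A → IsHomFrac 𝒜 K B → A ≤ B → toFun A ≤ toFun B
  idem : ∀ A, A ≠ 0 → IsHomFrac 𝒜 K A → toFun (toFun A) = toFun A

/-- A classical star operation on the domain `R`. -/
structure StarOp (R : Type*) [CommRing R] [IsDomain R]
    (K : Type*) [Field K] [Algebra R K] [IsFractionRing R K] where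
  toFun : FractionalIdeal (nonZeroDivisors R) K → FractionalIdeal (nonZeroDivisors R) K
  map_span : ∀ x : K, x ≠ 0 →
    toFun (spanSingleton (nonZeroDivisors R) x) = spanSingleton (nonZeroDivisors R) x
  map_smul : ∀ x : K, x ≠ 0 → ∀ A, A ≠ 0 →
    toFun (spanSingleton (nonZeroDivisors R) x * A) = spanSingleton (nonZeroDivisors R) x * toFun A
  le_star : ∀ A, A ≠ 0 → A ≤ toFun A
  mono : ∀ A B, A ≠ 0 → B ≠ 0 → A ≤ B → toFun A ≤ toFun B
  idem : ∀ A, A ≠ 0 → toFun (toFun A) = toFun A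

section EStar

variable {Γ : Type*} [AddCommMonoid Γ] [LinearOrder Γ] [IsOrderedCancelAddMonoid Γ] [DecidableEq Γ]
  {R : Type*} [CommRing R] [IsDomain R]
  (𝒜 : Γ → AddSubgroup R) [GradedRing 𝒜]
  (K : Type*) [Field K] [Algebra R K] [IsFractionRing R K]

/-- The submodule `⋂ { z⁻¹ (C(zA))^⋆ : 0 ≠ z ∈ (R : A) }`. -/
def eStarSub (s : HomStarOp 𝒜 K) (A : FractionalIdeal (nonZeroDivisors R) K) : Submodule R K :=
  ⨅ z ∈ {z : K | z ≠ 0 ∧ spanSingleton (nonZeroDivisors R) z * A ≤ 1},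
    ↑(spanSingleton (nonZeroDivisors R) z⁻¹ *
      s.toFun (Cfrac 𝒜 K (spanSingleton (nonZeroDivisors R) z * A)))

/-- The extension `e(⋆)` of a homogeneous star operation `⋆`,
`A^{e(⋆)} := ⋂ { z⁻¹ (C(zA))^⋆ : 0 ≠ z ∈ (R : A) }` (which is a fractional ideal whenever
`A` is a nonzero fractional ideal). -/
noncomputable def eStar (s : HomStarOp 𝒜 K) (A : FractionalIdeal (nonZeroDivisors R) K) :
    FractionalIdeal (nonZeroDivisors R) K :=
  if h : IsFractional (nonZeroDivisors R) (eStarSub 𝒜 K s A) then ⟨_, h⟩ else 0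

end EStar



section MeetAux

open FractionalIdeal

variable {Γ : Type*} [AddCommMonoid Γ] [LinearOrder Γ] [IsOrderedCancelAddMonoid Γ] [DecidableEq Γ]
  {R : Type*} [CommRing R] [IsDomain R]
  (𝒜 : Γ → AddSubgroup R) [GradedRing 𝒜]
  (K : Type*) [Field K] [Algebra R K] [IsFractionRing R K]

lemma mem_idealOf' {J : FractionalIdeal (nonZeroDivisors R) K} {r : R} :
    r ∈ idealOf K J ↔ algebraMap R K r ∈ J := Iff.rfl

lemma idealOf_coeIdeal' {I : Ideal R} :
    idealOf K (I : FractionalIdeal (nonZeroDivisors R) K) = I := by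
  ext r
  rw [mem_idealOf', FractionalIdeal.mem_coeIdeal]
  constructor
  · rintro ⟨a, ha, h⟩
    rwa [← IsFractionRing.injective R K h]
  · exact fun h => ⟨r, h, rfl⟩

lemma coeIdeal_idealOf' {J : FractionalIdeal (nonZeroDivisors R) K} (hJ : J ≤ 1) :
    ((idealOf K J : Ideal R) : FractionalIdeal (nonZeroDivisors R) K) = J := by
  obtain ⟨I, rfl⟩ := FractionalIdeal.le_one_iff_exists_coeIdeal.mp hJ
  rw [idealOf_coeIdeal']

lemma proj_hom_mul {a : R} {ε : Γ} (ha : a ∈ 𝒜 ε) (f : R) (γ : Γ) :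
    GradedRing.proj 𝒜 (ε + γ) (a * f) = a * GradedRing.proj 𝒜 γ f := by
  rw [GradedRing.proj_apply, GradedRing.proj_apply]
  letI : AddLeftCancelMonoid Γ :=
    { (inferInstance : AddCommMonoid Γ) with add_left_cancel := fun _ _ _ h => add_left_cancel h }
  exact DirectSum.coe_decompose_mul_add_of_left_mem 𝒜 ha

lemma isHomIdeal_span_singleton_mul {a : R} (ha : SetLike.IsHomogeneousElem 𝒜 a) {I : Ideal R}
    (hI : IsHomIdeal 𝒜 I) : IsHomIdeal 𝒜 (Ideal.span {a} * I) := by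
  intro f hf γ
  obtain ⟨x, hxI, rfl⟩ := Ideal.mem_span_singleton_mul.mp hf
  obtain ⟨ε, haε⟩ := ha
  have hx' : a * x = ∑ γ' ∈ (DirectSum.decompose 𝒜 x).support,
      a * (DirectSum.decompose 𝒜 x γ' : R) := by
    rw [← Finset.mul_sum, DirectSum.sum_support_decompose]
  rw [hx', map_sum]
  apply Ideal.sum_mem
  intro γ' _
  have hmem : a * (DirectSum.decompose 𝒜 x γ' : R) ∈ 𝒜 (ε + γ') :=
    SetLike.mul_mem_graded haε (SetLike.coe_mem _)
  have hterm : a * (DirectSum.decompose 𝒜 x γ' : R) ∈ Ideal.span {a} * I :=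
    Ideal.mem_span_singleton_mul.mpr ⟨_, hI x hxI γ', rfl⟩
  by_cases h : γ = ε + γ'
  · rw [h, GradedRing.proj_apply, DirectSum.decompose_of_mem_same 𝒜 hmem]
    exact hterm
  · rw [GradedRing.proj_apply, DirectSum.decompose_of_mem_ne 𝒜 hmem (Ne.symm h)]
    exact zero_mem _

lemma algebraMap_ne_zero' {s : R} (hs : s ≠ 0) : algebraMap R K s ≠ 0 := fun h =>
  hs (IsFractionRing.injective R K (h.trans (_root_.map_zero _).symm))

lemma mem_spanSingleton_mul_iff' {c x : K} (hc : c ≠ 0)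
    {J : FractionalIdeal (nonZeroDivisors R) K} :
    x ∈ spanSingleton (nonZeroDivisors R) c * J ↔ c⁻¹ * x ∈ J := by
  rw [FractionalIdeal.mem_singleton_mul]
  constructor
  · rintro ⟨y, hy, rfl⟩
    rwa [inv_mul_cancel_left₀ hc]
  · intro h
    exact ⟨c⁻¹ * x, h, by rw [mul_inv_cancel_left₀ hc]⟩

/-- The workhorse: homogeneous components of elements of `c·J` remain in `c·J`, for `J`
homogeneous fractional and `c` homogeneous. -/
lemma proj_mem_spanSingleton_mul {J : FractionalIdeal (nonZeroDivisors R) K}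
    (hJ : IsHomFrac 𝒜 K J) {c : R} (hc : SetLike.IsHomogeneousElem 𝒜 c) {f : R}
    (hf : algebraMap R K f ∈ spanSingleton (nonZeroDivisors R) (algebraMap R K c) * J) (γ : Γ) :
    algebraMap R K (GradedRing.proj 𝒜 γ f) ∈
      spanSingleton (nonZeroDivisors R) (algebraMap R K c) * J := by
  obtain ⟨s, hs0, hshomog, hsle, hshom⟩ := hJ
  obtain ⟨ε, hsε⟩ := hshomog
  set I := idealOf K (spanSingleton (nonZeroDivisors R) (algebraMap R K s) * J) with hIdef
  have hcoe : ((I : Ideal R) : FractionalIdeal (nonZeroDivisors R) K) =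
      spanSingleton (nonZeroDivisors R) (algebraMap R K s) * J := coeIdeal_idealOf' K hsle
  have hs' : algebraMap R K s ≠ 0 := algebraMap_ne_zero' K hs0
  -- s * f ∈ span{c} * I
  obtain ⟨y, hyJ, hfy⟩ := FractionalIdeal.mem_singleton_mul.mp hf
  have hsyI : s * f ∈ Ideal.span {c} * I := by
    have hy' : algebraMap R K s * y ∈
        spanSingleton (nonZeroDivisors R) (algebraMap R K s) * J :=
      FractionalIdeal.mem_singleton_mul.mpr ⟨y, hyJ, rfl⟩
    rw [← hcoe, FractionalIdeal.mem_coeIdeal] at hy'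
    obtain ⟨i, hiI, hieq⟩ := hy'
    have : algebraMap R K (s * f) = algebraMap R K (c * i) := by
      rw [_root_.map_mul, _root_.map_mul, hfy, hieq]; ring
    rw [IsFractionRing.injective R K this]
    exact Ideal.mem_span_singleton_mul.mpr ⟨i, hiI, rfl⟩
  have h2 := isHomIdeal_span_singleton_mul 𝒜 hc hshom (s * f) hsyI (ε + γ)
  rw [proj_hom_mul 𝒜 hsε f γ] at h2
  obtain ⟨i', hi'I, hi'eq⟩ := Ideal.mem_span_singleton_mul.mp h2
  have hi'K : algebraMap R K i' ∈
      spanSingleton (nonZeroDivisors R) (algebraMap R K s) * J := by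
    rw [← hcoe]; exact FractionalIdeal.mem_coeIdeal_of_mem _ hi'I
  obtain ⟨y', hy'J, hy'eq⟩ := FractionalIdeal.mem_singleton_mul.mp hi'K
  refine FractionalIdeal.mem_singleton_mul.mpr ⟨y', hy'J, ?_⟩
  have : algebraMap R K s * algebraMap R K (GradedRing.proj 𝒜 γ f) =
      algebraMap R K s * (algebraMap R K c * y') := by
    rw [← _root_.map_mul, ← hi'eq, _root_.map_mul, hy'eq]; ring
  exact mul_left_cancel₀ hs' this

lemma isHomFrac_one' : IsHomFrac 𝒜 K (1 : FractionalIdeal (nonZeroDivisors R) K) := by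
  refine ⟨1, one_ne_zero, SetLike.isHomogeneousElem_one 𝒜, ?_, ?_⟩
  · rw [_root_.map_one, spanSingleton_one, one_mul]
  · rw [_root_.map_one, spanSingleton_one, one_mul]
    intro f _ γ
    rw [mem_idealOf']
    exact FractionalIdeal.coe_mem_one _ _

lemma isHomFrac_smul' {x : K} (hx : x ≠ 0) (hxel : IsHomElem 𝒜 K x)
    {B : FractionalIdeal (nonZeroDivisors R) K} (hBf : IsHomFrac 𝒜 K B) :
    IsHomFrac 𝒜 K (spanSingleton (nonZeroDivisors R) x * B) := by
  obtain ⟨a, b, hahom, hbhom, hb0, hab⟩ := hxel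
  obtain ⟨s, hs0, hshomog, hsle, hshom⟩ := hBf
  have key : spanSingleton (nonZeroDivisors R) (algebraMap R K (b * s)) *
      (spanSingleton (nonZeroDivisors R) x * B) =
      ((Ideal.span {a} * idealOf K (spanSingleton (nonZeroDivisors R) (algebraMap R K s) * B) :
        Ideal R) : FractionalIdeal (nonZeroDivisors R) K) := by
    rw [FractionalIdeal.coeIdeal_mul, coeIdeal_idealOf' K hsle,
      FractionalIdeal.coeIdeal_span_singleton, _root_.map_mul]
    rw [← FractionalIdeal.spanSingleton_mul_spanSingleton]
    have hbx : spanSingleton (nonZeroDivisors R) (algebraMap R K b) *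
        spanSingleton (nonZeroDivisors R) x = spanSingleton (nonZeroDivisors R) (algebraMap R K a) := by
      rw [FractionalIdeal.spanSingleton_mul_spanSingleton]
      congr 1
      rw [← hab]; ring
    calc spanSingleton (nonZeroDivisors R) (algebraMap R K b) *
          spanSingleton (nonZeroDivisors R) (algebraMap R K s) *
          (spanSingleton (nonZeroDivisors R) x * B)
        = (spanSingleton (nonZeroDivisors R) (algebraMap R K b) *
            spanSingleton (nonZeroDivisors R) x) *
          (spanSingleton (nonZeroDivisors R) (algebraMap R K s) * B) := by ring
      _ = spanSingleton (nonZeroDivisors R) (algebraMap R K a) *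
          (spanSingleton (nonZeroDivisors R) (algebraMap R K s) * B) := by rw [hbx]
  refine ⟨b * s, mul_ne_zero hb0 hs0, SetLike.IsHomogeneousElem.mul hbhom hshomog, ?_, ?_⟩
  · rw [key]
    exact FractionalIdeal.coeIdeal_le_one
  · rw [key, idealOf_coeIdeal']
    exact isHomIdeal_span_singleton_mul 𝒜 hahom hshom

lemma isHomFrac_spanSingleton' {x : K} (hx : x ≠ 0) (hxel : IsHomElem 𝒜 K x) :
    IsHomFrac 𝒜 K (spanSingleton (nonZeroDivisors R) x) := by
  have := isHomFrac_smul' 𝒜 K hx hxel (isHomFrac_one' 𝒜 K)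
  rwa [mul_one] at this

end MeetAux

section MeetOp

open FractionalIdeal

variable {Γ : Type*} [AddCommMonoid Γ] [LinearOrder Γ] [IsOrderedCancelAddMonoid Γ] [DecidableEq Γ]
  {R : Type*} [CommRing R] [IsDomain R]
  (𝒜 : Γ → AddSubgroup R) [GradedRing 𝒜]
  (K : Type*) [Field K] [Algebra R K] [IsFractionRing R K]

variable (Δ : Set (HomStarOp 𝒜 K)) (hne : Δ.Nonempty)

/-- The infimum of the fractional ideals `u(B)`, `u ∈ Δ`, as a fractional ideal. -/
noncomputable def meetFI (B : FractionalIdeal (nonZeroDivisors R) K) :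
    FractionalIdeal (nonZeroDivisors R) K :=
  ⟨⨅ u ∈ Δ, (u.toFun B : Submodule R K), by
    obtain ⟨u, hu⟩ := hne
    exact FractionalIdeal.isFractional_of_le (iInf₂_le u hu)⟩

lemma mem_meetFI {B : FractionalIdeal (nonZeroDivisors R) K} {x : K} :
    x ∈ meetFI 𝒜 K Δ hne B ↔ ∀ u ∈ Δ, x ∈ u.toFun B := by
  constructor
  · intro hx u hu
    exact (Submodule.mem_iInf _).mp ((Submodule.mem_iInf _).mp hx u) hu
  · intro h
    exact (Submodule.mem_iInf _).mpr fun u => (Submodule.mem_iInf _).mpr fun hu => h u hu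

lemma meetFI_le {B : FractionalIdeal (nonZeroDivisors R) K} {u : HomStarOp 𝒜 K} (hu : u ∈ Δ) :
    meetFI 𝒜 K Δ hne B ≤ u.toFun B :=
  fun x hx => (mem_meetFI 𝒜 K Δ hne).mp hx u hu

lemma le_meetFI {B C : FractionalIdeal (nonZeroDivisors R) K}
    (h : ∀ u ∈ Δ, C ≤ u.toFun B) : C ≤ meetFI 𝒜 K Δ hne B :=
  fun x hx => (mem_meetFI 𝒜 K Δ hne).mpr fun u hu => h u hu hx

lemma le_meetFI_self {B : FractionalIdeal (nonZeroDivisors R) K} (hB : B ≠ 0)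
    (hBf : IsHomFrac 𝒜 K B) : B ≤ meetFI 𝒜 K Δ hne B :=
  le_meetFI 𝒜 K Δ hne fun u _ => u.le_star B hB hBf

lemma meetFI_ne_zero {B : FractionalIdeal (nonZeroDivisors R) K} (hB : B ≠ 0)
    (hBf : IsHomFrac 𝒜 K B) : meetFI 𝒜 K Δ hne B ≠ 0 := by
  intro h
  exact hB (FractionalIdeal.le_zero_iff.mp (h ▸ le_meetFI_self 𝒜 K Δ hne hB hBf))

lemma isHomFrac_meetFI {B : FractionalIdeal (nonZeroDivisors R) K} (hB : B ≠ 0)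
    (hBf : IsHomFrac 𝒜 K B) : IsHomFrac 𝒜 K (meetFI 𝒜 K Δ hne B) := by
  obtain ⟨u₀, hu₀⟩ := id hne
  obtain ⟨s, hs0, hshomog, hsle, _⟩ := u₀.hom B hB hBf
  have hs' : algebraMap R K s ≠ 0 := algebraMap_ne_zero' K hs0
  refine ⟨s, hs0, hshomog, ?_, ?_⟩
  · calc spanSingleton (nonZeroDivisors R) (algebraMap R K s) * meetFI 𝒜 K Δ hne B
        ≤ spanSingleton (nonZeroDivisors R) (algebraMap R K s) * u₀.toFun B :=
          _root_.mul_le_mul_right (meetFI_le 𝒜 K Δ hne hu₀) _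
      _ ≤ 1 := hsle
  · intro f hf γ
    rw [mem_idealOf'] at hf ⊢
    rw [mem_spanSingleton_mul_iff' K hs', mem_meetFI] at hf ⊢
    intro u hu
    have h1 : algebraMap R K f ∈
        spanSingleton (nonZeroDivisors R) (algebraMap R K s) * u.toFun B :=
      (mem_spanSingleton_mul_iff' K hs').mpr (hf u hu)
    have h2 := proj_mem_spanSingleton_mul 𝒜 K (u.hom B hB hBf) hshomog h1 γ
    exact (mem_spanSingleton_mul_iff' K hs').mp h2

lemma meetFI_smul {x : K} (hx : x ≠ 0) (hxel : IsHomElem 𝒜 K x)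
    {B : FractionalIdeal (nonZeroDivisors R) K} (hB : B ≠ 0) (hBf : IsHomFrac 𝒜 K B) :
    meetFI 𝒜 K Δ hne (spanSingleton (nonZeroDivisors R) x * B) =
      spanSingleton (nonZeroDivisors R) x * meetFI 𝒜 K Δ hne B := by
  apply le_antisymm
  · intro y hy
    have hy' : y ∈ meetFI 𝒜 K Δ hne (spanSingleton (nonZeroDivisors R) x * B) := hy
    show y ∈ spanSingleton (nonZeroDivisors R) x * meetFI 𝒜 K Δ hne B
    rw [mem_spanSingleton_mul_iff' K hx, mem_meetFI]
    rw [mem_meetFI] at hy'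
    intro u hu
    have := hy' u hu
    rw [u.map_smul x hx hxel B hB hBf, mem_spanSingleton_mul_iff' K hx] at this
    exact this
  · intro y hy
    have hy' : y ∈ spanSingleton (nonZeroDivisors R) x * meetFI 𝒜 K Δ hne B := hy
    show y ∈ meetFI 𝒜 K Δ hne (spanSingleton (nonZeroDivisors R) x * B)
    rw [mem_spanSingleton_mul_iff' K hx] at hy'
    rw [mem_meetFI] at hy' ⊢
    intro u hu
    rw [u.map_smul x hx hxel B hB hBf, mem_spanSingleton_mul_iff' K hx]
    exact hy' u hu

/-- The `toFun` of the meet of a nonempty family of homogeneous star operations. -/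
noncomputable def meetFun (B : FractionalIdeal (nonZeroDivisors R) K) :
    FractionalIdeal (nonZeroDivisors R) K :=
  if B ≠ 0 ∧ IsHomFrac 𝒜 K B then meetFI 𝒜 K Δ hne B else B

lemma meetFun_eq {B : FractionalIdeal (nonZeroDivisors R) K} (hB : B ≠ 0)
    (hBf : IsHomFrac 𝒜 K B) : meetFun 𝒜 K Δ hne B = meetFI 𝒜 K Δ hne B :=
  if_pos ⟨hB, hBf⟩

/-- The meet of a nonempty family of homogeneous star operations. -/
noncomputable def meetOp : HomStarOp 𝒜 K where
  toFun := meetFun 𝒜 K Δ hne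
  hom B hB hBf := by
    rw [meetFun_eq 𝒜 K Δ hne hB hBf]
    exact isHomFrac_meetFI 𝒜 K Δ hne hB hBf
  map_span x hx hxel := by
    have hnz : spanSingleton (nonZeroDivisors R) x ≠ 0 :=
      FractionalIdeal.spanSingleton_ne_zero_iff.mpr hx
    have hsf := isHomFrac_spanSingleton' 𝒜 K hx hxel
    rw [meetFun_eq 𝒜 K Δ hne hnz hsf]
    apply le_antisymm
    · obtain ⟨u₀, hu₀⟩ := id hne
      exact (meetFI_le 𝒜 K Δ hne hu₀).trans (le_of_eq (u₀.map_span x hx hxel))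
    · exact le_meetFI 𝒜 K Δ hne fun u hu => le_of_eq (u.map_span x hx hxel).symm
  map_smul x hx hxel B hB hBf := by
    have hnz : spanSingleton (nonZeroDivisors R) x * B ≠ 0 := by
      intro h
      obtain ⟨b, hbB, hb0⟩ : ∃ b ∈ B, b ≠ (0 : K) := by
        by_contra hcon
        push_neg at hcon
        exact hB (FractionalIdeal.eq_zero_iff.mpr hcon)
      have : x * b ∈ spanSingleton (nonZeroDivisors R) x * B :=
        FractionalIdeal.mem_singleton_mul.mpr ⟨b, hbB, rfl⟩
      rw [h, FractionalIdeal.mem_zero_iff] at this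
      exact mul_ne_zero hx hb0 this
    rw [meetFun_eq 𝒜 K Δ hne hnz (isHomFrac_smul' 𝒜 K hx hxel hBf),
      meetFun_eq 𝒜 K Δ hne hB hBf]
    exact meetFI_smul 𝒜 K Δ hne hx hxel hB hBf
  le_star B hB hBf := by
    rw [meetFun_eq 𝒜 K Δ hne hB hBf]
    exact le_meetFI_self 𝒜 K Δ hne hB hBf
  mono B C hB hC hBf hCf hBC := by
    rw [meetFun_eq 𝒜 K Δ hne hB hBf, meetFun_eq 𝒜 K Δ hne hC hCf]
    exact le_meetFI 𝒜 K Δ hne fun u hu =>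
      (meetFI_le 𝒜 K Δ hne hu).trans (u.mono B C hB hC hBf hCf hBC)
  idem B hB hBf := by
    have h1 : meetFI 𝒜 K Δ hne B ≠ 0 := meetFI_ne_zero 𝒜 K Δ hne hB hBf
    have h2 : IsHomFrac 𝒜 K (meetFI 𝒜 K Δ hne B) := isHomFrac_meetFI 𝒜 K Δ hne hB hBf
    rw [meetFun_eq 𝒜 K Δ hne hB hBf, meetFun_eq 𝒜 K Δ hne h1 h2]
    apply le_antisymm
    · refine le_meetFI 𝒜 K Δ hne fun u hu => ?_
      have hub0 : u.toFun B ≠ 0 := fun h =>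
        hB (FractionalIdeal.le_zero_iff.mp (h ▸ u.le_star B hB hBf))
      have hubf : IsHomFrac 𝒜 K (u.toFun B) := u.hom B hB hBf
      calc meetFI 𝒜 K Δ hne (meetFI 𝒜 K Δ hne B)
          ≤ u.toFun (meetFI 𝒜 K Δ hne B) := meetFI_le 𝒜 K Δ hne hu
        _ ≤ u.toFun (u.toFun B) :=
            u.mono _ _ h1 hub0 h2 hubf ((meetFI_le 𝒜 K Δ hne hu))
        _ = u.toFun B := u.idem B hB hBf
    · exact le_meetFI 𝒜 K Δ hne fun u hu => u.le_star _ h1 h2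

lemma meetOp_toFun_eq {B : FractionalIdeal (nonZeroDivisors R) K} (hB : B ≠ 0)
    (hBf : IsHomFrac 𝒜 K B) : (meetOp 𝒜 K Δ hne).toFun B = meetFI 𝒜 K Δ hne B :=
  meetFun_eq 𝒜 K Δ hne hB hBf

end MeetOp

/-- a nonempty intersection `W = ⋂ᵢ W_{Aᵢ}` of subbasic open sets of `HStar(R)` is
closed under infima and suprema (computed in `HStar(R)`) of its nonempty subsets — it is a
complete lattice — and `W` is quasi-compact. -/
theorem stmt_17
    {Γ : Type*} [AddCommMonoid Γ] [LinearOrder Γ] [IsOrderedCancelAddMonoid Γ] [DecidableEq Γ]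
    {R : Type*} [CommRing R] [IsDomain R]
    (𝒜 : Γ → AddSubgroup R) [GradedRing 𝒜]
    (K : Type*) [Field K] [Algebra R K] [IsFractionRing R K]
    {ι : Type*} [Nonempty ι] (A : ι → FractionalIdeal (nonZeroDivisors R) K)
    (hA : ∀ i, A i ≠ 0 ∧ IsHomFrac 𝒜 K (A i)) :
    letI : TopologicalSpace (HomStarOp 𝒜 K) := TopologicalSpace.generateFrom
      {U | ∃ B : FractionalIdeal (nonZeroDivisors R) K, B ≠ 0 ∧ IsHomFrac 𝒜 K B ∧
        U = {t : HomStarOp 𝒜 K | (1 : K) ∈ t.toFun B}}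
    ∀ W : Set (HomStarOp 𝒜 K),
      W = {t : HomStarOp 𝒜 K | ∀ i, (1 : K) ∈ t.toFun (A i)} → W.Nonempty →
      ((∀ Δ ⊆ W, Δ.Nonempty →
        (∀ t : HomStarOp 𝒜 K,
          ((∀ u ∈ Δ, ∀ B : FractionalIdeal (nonZeroDivisors R) K, B ≠ 0 → IsHomFrac 𝒜 K B →
            t.toFun B ≤ u.toFun B) ∧
          (∀ w : HomStarOp 𝒜 K,
            (∀ u ∈ Δ, ∀ B : FractionalIdeal (nonZeroDivisors R) K, B ≠ 0 → IsHomFrac 𝒜 K B →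
              w.toFun B ≤ u.toFun B) →
            (∀ B : FractionalIdeal (nonZeroDivisors R) K, B ≠ 0 → IsHomFrac 𝒜 K B →
              w.toFun B ≤ t.toFun B))) → t ∈ W) ∧
        (∀ t : HomStarOp 𝒜 K,
          ((∀ u ∈ Δ, ∀ B : FractionalIdeal (nonZeroDivisors R) K, B ≠ 0 → IsHomFrac 𝒜 K B →
            u.toFun B ≤ t.toFun B) ∧
          (∀ w : HomStarOp 𝒜 K,
            (∀ u ∈ Δ, ∀ B : FractionalIdeal (nonZeroDivisors R) K, B ≠ 0 → IsHomFrac 𝒜 K B →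
              u.toFun B ≤ w.toFun B) →
            (∀ B : FractionalIdeal (nonZeroDivisors R) K, B ≠ 0 → IsHomFrac 𝒜 K B →
              t.toFun B ≤ w.toFun B))) → t ∈ W)) ∧
      IsCompact W) := by
  intro W hW hWne
  subst hW
  constructor
  · -- complete lattice part
    intro Δ hΔW hΔne
    constructor
    · -- infima
      rintro t ⟨_, hglb⟩
      have hlow : ∀ u ∈ Δ, ∀ B : FractionalIdeal (nonZeroDivisors R) K, B ≠ 0 →
          IsHomFrac 𝒜 K B → (meetOp 𝒜 K Δ hΔne).toFun B ≤ u.toFun B := by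
        intro u hu B hB hBf
        rw [meetOp_toFun_eq 𝒜 K Δ hΔne hB hBf]
        exact meetFI_le 𝒜 K Δ hΔne hu
      have hw := hglb (meetOp 𝒜 K Δ hΔne) hlow
      intro i
      have h1 := hw (A i) (hA i).1 (hA i).2
      rw [meetOp_toFun_eq 𝒜 K Δ hΔne (hA i).1 (hA i).2] at h1
      exact h1 ((mem_meetFI 𝒜 K Δ hΔne).mpr fun u hu => hΔW hu i)
    · -- suprema
      rintro t ⟨hub, _⟩
      intro i
      obtain ⟨u, hu⟩ := hΔne
      exact hub u hu (A i) (hA i).1 (hA i).2 (hΔW hu i)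
  · -- compactness
    letI : TopologicalSpace (HomStarOp 𝒜 K) := TopologicalSpace.generateFrom
      {U | ∃ B : FractionalIdeal (nonZeroDivisors R) K, B ≠ 0 ∧ IsHomFrac 𝒜 K B ∧
        U = {t : HomStarOp 𝒜 K | (1 : K) ∈ t.toFun B}}
    apply isCompact_of_finite_subcover
    intro σ U hUopen hcover
    set W : Set (HomStarOp 𝒜 K) := {t : HomStarOp 𝒜 K | ∀ i, (1 : K) ∈ t.toFun (A i)} with hWdef
    have hwstW : meetOp 𝒜 K W hWne ∈ W := by
      intro i
      rw [meetOp_toFun_eq 𝒜 K W hWne (hA i).1 (hA i).2, mem_meetFI]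
      intro u hu
      exact hu i
    obtain ⟨j, hj⟩ := Set.mem_iUnion.mp (hcover hwstW)
    refine ⟨{j}, ?_⟩
    have hbasis := TopologicalSpace.isTopologicalBasis_of_subbasis
      (s := {U | ∃ B : FractionalIdeal (nonZeroDivisors R) K, B ≠ 0 ∧ IsHomFrac 𝒜 K B ∧
        U = {t : HomStarOp 𝒜 K | (1 : K) ∈ t.toFun B}}) rfl
    obtain ⟨v, ⟨F, ⟨hFfin, hFsub⟩, rfl⟩, hxv, hvU⟩ :=
      hbasis.exists_subset_of_mem_open hj (hUopen j)
    have hWv : W ⊆ ⋂₀ F := by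
      intro u hu
      intro s hsF
      obtain ⟨B, hB0, hBf, rfl⟩ := hFsub hsF
      have h1 : (1 : K) ∈ (meetOp 𝒜 K W hWne).toFun B := hxv _ hsF
      rw [meetOp_toFun_eq 𝒜 K W hWne hB0 hBf, mem_meetFI] at h1
      exact h1 u hu
    intro u hu
    simp only [Finset.mem_singleton, Set.mem_iUnion]
    exact ⟨j, rfl, hvU (hWv hu)⟩
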